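/- Consider a sparsity level s and weights ω with ω_j ≥ 1 satisfying s ≥ 2‖ω‖_∞². If A satisfies the ω-RIP of order s with constant δ_{ω,s}, then for every x ∈ C^N, ‖Ax‖₂ ≤ √(1+δ_{ω,s}) ( ‖x‖₂ + (2/√s) ‖x‖_{ω,1} ). -/

import Mathlib

open Finset

/-- ℓ2 norm of a finitely-indexed complex vector. -/
noncomputable def l2 {n : ℕ} (x : Fin n → ℂ) : ℝ := Real.sqrt (∑ j, ‖x j‖ ^ 2)

/-- ℓ1 norm. -/
noncomputable def l1 {n : ℕ} (x : Fin n → ℂ) : ℝ := ∑ j, ‖x j‖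

/-- Support of a vector as a finset. -/
noncomputable def spt {n : ℕ} (x : Fin n → ℂ) : Finset (Fin n) := Finset.univ.filter (fun j => x j ≠ 0)

/-- Weighted ℓ0 "norm" ‖x‖_{ω,0} = ∑_{j : x_j ≠ 0} ω_j². -/
noncomputable def wnorm0 {n : ℕ} (ω : Fin n → ℝ) (x : Fin n → ℂ) : ℝ :=
  ∑ j ∈ spt x, (ω j) ^ 2

/-- Weighted ℓ1 norm ‖x‖_{ω,1} = ∑_j |x_j| ω_j. -/
noncomputable def wl1 {n : ℕ} (ω : Fin n → ℝ) (x : Fin n → ℂ) : ℝ := ∑ j, ‖x j‖ * ω j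

/-- Weighted cardinality of an index set. -/
noncomputable def wcard {n : ℕ} (ω : Fin n → ℝ) (S : Finset (Fin n)) : ℝ := ∑ j ∈ S, (ω j) ^ 2

/-- Restriction of a vector to an index set (zeroing the other coordinates). -/
def restr {n : ℕ} (S : Finset (Fin n)) (x : Fin n → ℂ) : Fin n → ℂ :=
  fun j => if j ∈ S then x j else 0

lemma l2_nonneg' {n : ℕ} (x : Fin n → ℂ) : 0 ≤ l2 x := Real.sqrt_nonneg _
lemma l2_sq' {n : ℕ} (x : Fin n → ℂ) : l2 x ^ 2 = ∑ j, ‖x j‖ ^ 2 :=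
  Real.sq_sqrt (Finset.sum_nonneg fun _ _ => sq_nonneg _)
lemma l2_eq_norm' {n : ℕ} (x : Fin n → ℂ) :
    l2 x = ‖(WithLp.equiv 2 (Fin n → ℂ)).symm x‖ := by
  rw [EuclideanSpace.norm_eq]; rfl
lemma l2_add_le' {n : ℕ} (x y : Fin n → ℂ) : l2 (x + y) ≤ l2 x + l2 y := by
  simp only [l2_eq_norm']
  have h : (WithLp.equiv 2 (Fin n → ℂ)).symm (x + y)
      = (WithLp.equiv 2 (Fin n → ℂ)).symm x + (WithLp.equiv 2 (Fin n → ℂ)).symm y := rfl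
  rw [h]; exact norm_add_le _ _
lemma sqrt_le_of_sq' {a b : ℝ} (hb : 0 ≤ b) (h : a ≤ b ^ 2) : Real.sqrt a ≤ b := by
  calc Real.sqrt a ≤ Real.sqrt (b ^ 2) := Real.sqrt_le_sqrt h
  _ = b := Real.sqrt_sq hb

lemma wl1_nonneg' {n : ℕ} (ω : Fin n → ℝ) (hω : ∀ j, 1 ≤ ω j) (x : Fin n → ℂ) : 0 ≤ wl1 ω x :=
  Finset.sum_nonneg fun j _ => mul_nonneg (norm_nonneg _) (le_trans zero_le_one (hω j))

lemma wl1_restr {n : ℕ} (ω : Fin n → ℝ) (S : Finset (Fin n)) (x : Fin n → ℂ) :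
    wl1 ω (restr S x) = ∑ j ∈ S, ‖x j‖ * ω j := by
  rw [wl1]
  rw [← Finset.sum_subset (Finset.subset_univ S)]
  · exact Finset.sum_congr rfl fun j hj => by simp [restr, hj]
  · intro j _ hj; simp [restr, hj]

lemma wl1_split {n : ℕ} (ω : Fin n → ℝ) (S : Finset (Fin n)) (x : Fin n → ℂ) :
    wl1 ω x = wl1 ω (restr S x) + wl1 ω (restr Sᶜ x) := by
  simp only [wl1, ← Finset.sum_add_distrib]
  refine Finset.sum_congr rfl fun j _ => ?_
  by_cases hj : j ∈ S <;> simp [restr, hj]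

lemma restr_split {n : ℕ} (S : Finset (Fin n)) (x : Fin n → ℂ) :
    x = restr S x + restr Sᶜ x := by
  funext j; by_cases hj : j ∈ S <;> simp [restr, hj]

lemma spt_restr_compl {n : ℕ} (S : Finset (Fin n)) (x : Fin n → ℂ) :
    spt (restr Sᶜ x) = spt x \ S := by
  ext j
  by_cases hj : j ∈ S <;> simp [spt, restr, hj]

lemma wnorm0_restr_le {n : ℕ} (ω : Fin n → ℝ) (S : Finset (Fin n)) (x : Fin n → ℂ) :
    wnorm0 ω (restr S x) ≤ wcard ω S := by
  rw [wnorm0, wcard]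
  refine Finset.sum_le_sum_of_subset_of_nonneg ?_ fun j _ _ => sq_nonneg _
  intro j hj
  rw [spt, Finset.mem_filter] at hj
  simp only [restr] at hj
  by_contra h
  exact hj.2 (by simp [h])
lemma exists_block {N : ℕ} (ω : Fin N → ℝ) (hω : ∀ j, 1 ≤ ω j) (s : ℝ)
    (hs : ∀ j, 2 * (ω j) ^ 2 ≤ s) (x : Fin N → ℂ) (hx : (spt x).Nonempty) :
    ∃ S : Finset (Fin N), S.Nonempty ∧ S ⊆ spt x ∧ wcard ω S ≤ s ∧
      (∀ j ∈ spt x, j ∉ S → ∀ l ∈ S, ‖x j‖ * ω l ≤ ‖x l‖ * ω j) ∧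
      (S = spt x ∨ s / 2 ≤ wcard ω S) := by
  classical
  have hωpos : ∀ j, 0 < ω j := fun j => lt_of_lt_of_le one_pos (hω j)
  obtain ⟨j₁, hj₁⟩ := id hx
  have hspos : 0 < s := lt_of_lt_of_le (by nlinarith [hωpos j₁]) (hs j₁)
  set P : Finset (Finset (Fin N)) := (spt x).powerset.filter
    (fun S => wcard ω S ≤ s ∧ ∀ j ∈ spt x, j ∉ S → ∀ l ∈ S, ‖x j‖ * ω l ≤ ‖x l‖ * ω j) with hP
  have hmemP : ∀ S, S ∈ P ↔ S ⊆ spt x ∧ wcard ω S ≤ s ∧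
      (∀ j ∈ spt x, j ∉ S → ∀ l ∈ S, ‖x j‖ * ω l ≤ ‖x l‖ * ω j) := by
    intro S; simp [hP, Finset.mem_filter, Finset.mem_powerset, and_assoc]
  have hPne : P.Nonempty := by
    refine ⟨∅, (hmemP ∅).2 ⟨Finset.empty_subset _, ?_, by simp⟩⟩
    simp [wcard]; linarith
  obtain ⟨S, hSP, hSmax⟩ := P.exists_max_image (wcard ω) hPne
  obtain ⟨hSsub, hScard, hSord⟩ := (hmemP S).1 hSP
  have hkey : S = spt x ∨ s / 2 ≤ wcard ω S := by
    by_contra hcon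
    push_neg at hcon
    obtain ⟨hne, hlt⟩ := hcon
    have hdne : (spt x \ S).Nonempty := by
      rw [Finset.sdiff_nonempty]
      intro h; exact hne (Finset.Subset.antisymm hSsub h)
    obtain ⟨j₀, hj₀mem, hj₀max⟩ := (spt x \ S).exists_max_image (fun j => ‖x j‖ / ω j) hdne
    have hj₀x : j₀ ∈ spt x := (Finset.mem_sdiff.1 hj₀mem).1
    have hj₀S : j₀ ∉ S := (Finset.mem_sdiff.1 hj₀mem).2
    have hins : insert j₀ S ∈ P := by
      refine (hmemP _).2 ⟨Finset.insert_subset hj₀x hSsub, ?_, ?_⟩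
      · rw [wcard, Finset.sum_insert hj₀S]
        have := hs j₀
        rw [wcard] at hlt
        linarith
      · intro j hj hjn l hl
        rcases Finset.mem_insert.1 hl with rfl | hl
        · have hjd : j ∈ spt x \ S := Finset.mem_sdiff.2 ⟨hj, fun h => hjn (Finset.mem_insert_of_mem h)⟩
          have := hj₀max j hjd
          rw [div_le_div_iff₀ (hωpos j) (hωpos l)] at this
          linarith
        · exact hSord j hj (fun h => hjn (Finset.mem_insert_of_mem h)) l hl
    have hle := hSmax _ hins
    rw [wcard, Finset.sum_insert hj₀S, ← wcard] at hle
    nlinarith [hωpos j₀]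
  have hSne : S.Nonempty := by
    rcases hkey with rfl | hge
    · exact hx
    · rcases S.eq_empty_or_nonempty with rfl | h
      · rw [wcard, Finset.sum_empty] at hge; linarith
      · exact h
  exact ⟨S, hSne, hSsub, hScard, hSord, hkey⟩

lemma rip_l2_bound {m N : ℕ} (A : Matrix (Fin m) (Fin N) ℂ)
    (ω : Fin N → ℝ) (s : ℝ) (δ : ℝ) (hδ : 0 ≤ δ)
    (hRIP : ∀ z : Fin N → ℂ, wnorm0 ω z ≤ s →
      (1 - δ) * l2 z ^ 2 ≤ l2 (A.mulVec z) ^ 2 ∧ l2 (A.mulVec z) ^ 2 ≤ (1 + δ) * l2 z ^ 2)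
    (z : Fin N → ℂ) (hz : wnorm0 ω z ≤ s) :
    l2 (A.mulVec z) ≤ Real.sqrt (1 + δ) * l2 z := by
  have h := (hRIP z hz).2
  have h1 : (0:ℝ) ≤ 1 + δ := by linarith
  refine le_trans (le_of_eq (Real.sqrt_sq (l2_nonneg' _)).symm) ?_
  refine sqrt_le_of_sq' (mul_nonneg (Real.sqrt_nonneg _) (l2_nonneg' _)) ?_
  calc l2 (A.mulVec z) ^ 2 ≤ (1 + δ) * l2 z ^ 2 := h
  _ = (Real.sqrt (1 + δ) * l2 z) ^ 2 := by
      rw [mul_pow, Real.sq_sqrt h1]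

set_option maxHeartbeats 1000000 in
lemma key_induction {m N : ℕ} (A : Matrix (Fin m) (Fin N) ℂ)
    (ω : Fin N → ℝ) (hω : ∀ j, 1 ≤ ω j) (s : ℝ)
    (hs : ∀ j, 2 * (ω j) ^ 2 ≤ s) (hspos : 0 < s) (δ : ℝ) (hδ : 0 ≤ δ)
    (hRIP : ∀ z : Fin N → ℂ, wnorm0 ω z ≤ s →
      (1 - δ) * l2 z ^ 2 ≤ l2 (A.mulVec z) ^ 2 ∧ l2 (A.mulVec z) ^ 2 ≤ (1 + δ) * l2 z ^ 2) :
    ∀ n : ℕ, ∀ x : Fin N → ℂ, (spt x).card ≤ n → ∀ t : ℝ, 0 ≤ t →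
      (∀ j, ‖x j‖ ≤ t * ω j) →
      l2 (A.mulVec x) ≤ Real.sqrt (1 + δ) *
        (Real.sqrt s * t / 2 + (2 / Real.sqrt s) * wl1 ω x) := by
  have hσ : 0 < Real.sqrt s := Real.sqrt_pos.2 hspos
  have hσsq : Real.sqrt s ^ 2 = s := Real.sq_sqrt hspos.le
  have hδ1 : (0:ℝ) ≤ Real.sqrt (1 + δ) := Real.sqrt_nonneg _
  intro n
  induction n with
  | zero =>
    intro x hcard t ht htb
    have hx : x = 0 := by
      funext j
      show x j = 0
      by_contra h
      have : j ∈ spt x := by simp [spt, h]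
      have := Finset.card_pos.2 ⟨j, this⟩
      omega
    subst hx
    rw [Matrix.mulVec_zero]
    have h0 : l2 (0 : Fin m → ℂ) = 0 := by simp [l2]
    rw [h0]
    have hwl : wl1 ω (0 : Fin N → ℂ) = 0 := by simp [wl1]
    rw [hwl]
    positivity
  | succ n ih =>
    intro x hcard t ht htb
    rcases (spt x).eq_empty_or_nonempty with hemp | hne
    · have hx : x = 0 := by
        funext j
        show x j = 0
        by_contra h
        have : j ∈ spt x := by simp [spt, h]
        rw [hemp] at this; exact absurd this (Finset.notMem_empty j)
      subst hx
      rw [Matrix.mulVec_zero]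
      have h0 : l2 (0 : Fin m → ℂ) = 0 := by simp [l2]
      rw [h0]
      have hwl : wl1 ω (0 : Fin N → ℂ) = 0 := by simp [wl1]
      rw [hwl]
      positivity
    obtain ⟨S, hSne, hSsub, hScard, hSord, hSkey⟩ := exists_block ω hω s hs x hne
    set y := restr S x with hy
    set x' := restr Sᶜ x with hx'
    set a := wl1 ω y with ha
    have ha0 : 0 ≤ a := wl1_nonneg' ω hω y
    have hwl1x' : 0 ≤ wl1 ω x' := wl1_nonneg' ω hω x'
    have hsplit : x = y + x' := restr_split S x
    have htri : l2 (A.mulVec x) ≤ l2 (A.mulVec y) + l2 (A.mulVec x') := by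
      rw [hsplit, Matrix.mulVec_add]; exact l2_add_le' _ _
    -- bound on the first block
    have hyb : l2 (A.mulVec y) ≤ Real.sqrt (1 + δ) * l2 y :=
      rip_l2_bound A ω s δ hδ hRIP y (le_trans (wnorm0_restr_le ω S x) hScard)
    have hysq : l2 y ^ 2 ≤ t * a := by
      rw [l2_sq', ha, wl1_restr]
      have h1 : ∑ j, ‖y j‖ ^ 2 = ∑ j ∈ S, ‖x j‖ ^ 2 := by
        rw [← Finset.sum_subset (Finset.subset_univ S)]
        · exact Finset.sum_congr rfl fun j hj => by simp [hy, restr, hj]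
        · intro j _ hj; simp [hy, restr, hj]
      rw [h1, Finset.mul_sum]
      refine Finset.sum_le_sum fun j hj => ?_
      have := htb j
      have hn : (0:ℝ) ≤ ‖x j‖ := norm_nonneg _
      calc ‖x j‖ ^ 2 = ‖x j‖ * ‖x j‖ := by ring
      _ ≤ (t * ω j) * ‖x j‖ := mul_le_mul_of_nonneg_right this hn
      _ = t * (‖x j‖ * ω j) := by ring
    have hyl2 : l2 y ≤ Real.sqrt s * t / 2 + a / Real.sqrt s := by
      refine le_of_eq (Real.sqrt_sq (l2_nonneg' _)).symm |>.trans ?_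
      refine sqrt_le_of_sq' (by positivity) ?_
      have huv : (Real.sqrt s * t / 2) * (a / Real.sqrt s) = t * a / 2 := by
        field_simp
      nlinarith [sq_nonneg (Real.sqrt s * t / 2 - a / Real.sqrt s), huv, hysq,
        mul_nonneg ht ha0]
    -- bound entries of x'
    have hwc0 : 0 ≤ wcard ω S := Finset.sum_nonneg fun j _ => sq_nonneg _
    rcases hSkey with hfull | hhalf
    · -- S = spt x : x' = 0
      have hx'0 : x' = 0 := by
        funext j
        by_cases hjS : j ∈ S
        · simp [hx', restr, hjS]
        · have : j ∉ spt x := fun h => hjS (hfull ▸ h)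
          have hxj : x j = 0 := by
            by_contra h; exact this (by simp [spt, h])
          by_cases hjc : j ∈ Sᶜ <;> simp [hx', restr, hxj, hjc]
      have hAx'0 : l2 (A.mulVec x') = 0 := by
        rw [hx'0, Matrix.mulVec_zero]; simp [l2]
      have hwx'0 : wl1 ω x' = 0 := by rw [hx'0]; simp [wl1]
      have hwsum : wl1 ω x = a + wl1 ω x' := by rw [ha, hx', hy]; exact wl1_split ω S x
      calc l2 (A.mulVec x) ≤ l2 (A.mulVec y) + l2 (A.mulVec x') := htri
      _ = l2 (A.mulVec y) := by rw [hAx'0, add_zero]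
      _ ≤ Real.sqrt (1 + δ) * l2 y := hyb
      _ ≤ Real.sqrt (1 + δ) * (Real.sqrt s * t / 2 + a / Real.sqrt s) :=
          mul_le_mul_of_nonneg_left hyl2 hδ1
      _ ≤ Real.sqrt (1 + δ) * (Real.sqrt s * t / 2 + (2 / Real.sqrt s) * wl1 ω x) := by
          refine mul_le_mul_of_nonneg_left ?_ hδ1
          rw [hwsum, hwx'0, add_zero]
          have : a / Real.sqrt s ≤ 2 / Real.sqrt s * a := by
            rw [div_eq_mul_inv, div_eq_mul_inv]
            have : a * (Real.sqrt s)⁻¹ ≤ 2 * (Real.sqrt s)⁻¹ * a := by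
              have hinv : 0 < (Real.sqrt s)⁻¹ := inv_pos.2 hσ
              nlinarith
            exact this
          linarith
    · -- s/2 ≤ wcard S
      set t' := 2 * a / s with ht'
      have ht'0 : 0 ≤ t' := by positivity
      have hx'b : ∀ j, ‖x' j‖ ≤ t' * ω j := by
        intro j
        have hωj : (0:ℝ) < ω j := lt_of_lt_of_le one_pos (hω j)
        by_cases hjS : j ∈ Sᶜ
        · simp only [hx', restr, hjS, if_pos]
          by_cases hxj : x j = 0
          · rw [hxj, norm_zero]; positivity
          · have hjspt : j ∈ spt x := by simp [spt, hxj]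
            have hjnS : j ∉ S := Finset.mem_compl.1 hjS
            have hcross := hSord j hjspt hjnS
            have hsum : ‖x j‖ * wcard ω S ≤ ω j * a := by
              rw [wcard, ha, wl1_restr, Finset.mul_sum, Finset.mul_sum]
              refine Finset.sum_le_sum fun l hl => ?_
              have h1 := hcross l hl
              have hωl : (0:ℝ) < ω l := lt_of_lt_of_le one_pos (hω l)
              calc ‖x j‖ * ω l ^ 2 = (‖x j‖ * ω l) * ω l := by ring
              _ ≤ (‖x l‖ * ω j) * ω l := mul_le_mul_of_nonneg_right h1 hωl.le
              _ = ω j * (‖x l‖ * ω l) := by ring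
            have h2 : ‖x j‖ * (s / 2) ≤ ω j * a := by
              refine le_trans ?_ hsum
              exact mul_le_mul_of_nonneg_left hhalf (norm_nonneg _)
            rw [ht']
            rw [div_mul_eq_mul_div, le_div_iff₀ hspos]
            nlinarith
        · simp only [hx', restr, hjS, if_neg, not_false_iff]
          simp only [norm_zero]
          positivity
      have hcard' : (spt x').card ≤ n := by
        rw [hx', spt_restr_compl]
        have h1 : (spt x \ S).card = (spt x).card - S.card := Finset.card_sdiff_of_subset hSsub
        have h2 : 1 ≤ S.card := Finset.card_pos.2 hSne
        have h3 : S.card ≤ (spt x).card := Finset.card_le_card hSsub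
        omega
      have hihx' := ih x' hcard' t' ht'0 hx'b
      have hwsum : wl1 ω x = a + wl1 ω x' := by rw [ha, hx', hy]; exact wl1_split ω S x
      have hterm : Real.sqrt s * t' / 2 = a / Real.sqrt s := by
        rw [ht']
        calc Real.sqrt s * (2 * a / s) / 2 = (Real.sqrt s / s) * a := by ring
        _ = (Real.sqrt s / (Real.sqrt s * Real.sqrt s)) * a := by
            rw [Real.mul_self_sqrt hspos.le]
        _ = (1 / Real.sqrt s) * a := by
            rw [div_mul_eq_div_div, div_self hσ.ne']
        _ = a / Real.sqrt s := one_div_mul_eq_div _ _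
      calc l2 (A.mulVec x) ≤ l2 (A.mulVec y) + l2 (A.mulVec x') := htri
      _ ≤ Real.sqrt (1 + δ) * l2 y +
          Real.sqrt (1 + δ) * (Real.sqrt s * t' / 2 + (2 / Real.sqrt s) * wl1 ω x') := by
          refine add_le_add (hyb.trans ?_) hihx'
          exact le_refl _
      _ ≤ Real.sqrt (1 + δ) * (Real.sqrt s * t / 2 + a / Real.sqrt s) +
          Real.sqrt (1 + δ) * (a / Real.sqrt s + (2 / Real.sqrt s) * wl1 ω x') := by
          refine add_le_add (mul_le_mul_of_nonneg_left hyl2 hδ1) ?_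
          rw [hterm]
      _ = Real.sqrt (1 + δ) * (Real.sqrt s * t / 2 + (2 / Real.sqrt s) * (a + wl1 ω x')) := by
          rw [← mul_add]
          congr 1
          have h2 : a / Real.sqrt s + a / Real.sqrt s = (2 / Real.sqrt s) * a := by
            rw [← add_div, div_mul_eq_mul_div, two_mul]
          rw [mul_add (2 / Real.sqrt s), ← h2]
          ring
      _ = Real.sqrt (1 + δ) * (Real.sqrt s * t / 2 + (2 / Real.sqrt s) * wl1 ω x) := by
          rw [hwsum]


/-- Proposition on weighted RIP energy bound: if s ≥ 2‖ω‖_∞² and A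
satisfies the ω-RIP of order s, then ‖Ax‖₂ ≤ √(1+δ_{ω,s})(‖x‖₂ + (2/√s)‖x‖_{ω,1}). -/
theorem weighted_rip_energy_bound {m N : ℕ} (A : Matrix (Fin m) (Fin N) ℂ)
    (ω : Fin N → ℝ) (hω : ∀ j, 1 ≤ ω j) (s : ℝ)
    (hs : ∀ j, 2 * (ω j) ^ 2 ≤ s) (δ : ℝ) (hδ : 0 ≤ δ)
    (hRIP : ∀ z : Fin N → ℂ, wnorm0 ω z ≤ s →
      (1 - δ) * l2 z ^ 2 ≤ l2 (A.mulVec z) ^ 2 ∧ l2 (A.mulVec z) ^ 2 ≤ (1 + δ) * l2 z ^ 2) :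
    ∀ x : Fin N → ℂ,
      l2 (A.mulVec x) ≤ Real.sqrt (1 + δ) * (l2 x + (2 / Real.sqrt s) * wl1 ω x) := by
  intro x
  have hδ1 : (0:ℝ) ≤ Real.sqrt (1 + δ) := Real.sqrt_nonneg _
  rcases (spt x).eq_empty_or_nonempty with hemp | hne
  · have hx : x = 0 := by
      funext j
      show x j = 0
      by_contra h
      have : j ∈ spt x := by simp [spt, h]
      rw [hemp] at this; exact absurd this (Finset.notMem_empty j)
    subst hx
    rw [Matrix.mulVec_zero]
    have h0 : l2 (0 : Fin m → ℂ) = 0 := by simp [l2]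
    have h0' : l2 (0 : Fin N → ℂ) = 0 := by simp [l2]
    have hwl : wl1 ω (0 : Fin N → ℂ) = 0 := by simp [wl1]
    rw [h0, h0', hwl, mul_zero, add_zero, mul_zero]
  · obtain ⟨j₁, hj₁⟩ := id hne
    have hωpos : ∀ j, 0 < ω j := fun j => lt_of_lt_of_le one_pos (hω j)
    have hspos : 0 < s := lt_of_lt_of_le (by nlinarith [hωpos j₁]) (hs j₁)
    have hσ : 0 < Real.sqrt s := Real.sqrt_pos.2 hspos
    have hσsq : Real.sqrt s ^ 2 = s := Real.sq_sqrt hspos.le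
    obtain ⟨S, hSne, hSsub, hScard, hSord, hSkey⟩ := exists_block ω hω s hs x hne
    set y := restr S x with hy
    set x' := restr Sᶜ x with hx'
    set a := wl1 ω y with ha
    have ha0 : 0 ≤ a := wl1_nonneg' ω hω y
    have hwl1x' : 0 ≤ wl1 ω x' := wl1_nonneg' ω hω x'
    have hsplit : x = y + x' := restr_split S x
    have hyle : l2 y ≤ l2 x := by
      rw [l2, l2]
      refine Real.sqrt_le_sqrt (Finset.sum_le_sum fun j _ => ?_)
      by_cases hj : j ∈ S <;> simp [hy, restr, hj, sq_nonneg]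
    have hyb : l2 (A.mulVec y) ≤ Real.sqrt (1 + δ) * l2 y :=
      rip_l2_bound A ω s δ hδ hRIP y (le_trans (wnorm0_restr_le ω S x) hScard)
    rcases hSkey with hfull | hhalf
    · -- S = spt x, so x = y
      have hxy : x = y := by
        funext j
        by_cases hjS : j ∈ S
        · simp [hy, restr, hjS]
        · have : j ∉ spt x := fun h => hjS (hfull ▸ h)
          have hxj : x j = 0 := by
            by_contra h; exact this (by simp [spt, h])
          simp [hy, restr, hjS, hxj]
    -- conclude
      calc l2 (A.mulVec x) = l2 (A.mulVec y) := by rw [← hxy]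
      _ ≤ Real.sqrt (1 + δ) * l2 y := hyb
      _ = Real.sqrt (1 + δ) * l2 x := by rw [← hxy]
      _ ≤ Real.sqrt (1 + δ) * (l2 x + (2 / Real.sqrt s) * wl1 ω x) := by
          refine mul_le_mul_of_nonneg_left ?_ hδ1
          have hwx : 0 ≤ wl1 ω x := wl1_nonneg' ω hω x
          have h2σ : 0 ≤ 2 / Real.sqrt s := by positivity
          nlinarith
    · set t' := 2 * a / s with ht'
      have ht'0 : 0 ≤ t' := by positivity
      have hx'b : ∀ j, ‖x' j‖ ≤ t' * ω j := by
        intro j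
        have hωj : (0:ℝ) < ω j := hωpos j
        by_cases hjS : j ∈ Sᶜ
        · simp only [hx', restr, hjS, if_pos]
          by_cases hxj : x j = 0
          · rw [hxj, norm_zero]; positivity
          · have hjspt : j ∈ spt x := by simp [spt, hxj]
            have hjnS : j ∉ S := Finset.mem_compl.1 hjS
            have hcross := hSord j hjspt hjnS
            have hsum : ‖x j‖ * wcard ω S ≤ ω j * a := by
              rw [wcard, ha, wl1_restr, Finset.mul_sum, Finset.mul_sum]
              refine Finset.sum_le_sum fun l hl => ?_
              have h1 := hcross l hl
              have hωl : (0:ℝ) < ω l := hωpos l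
              calc ‖x j‖ * ω l ^ 2 = (‖x j‖ * ω l) * ω l := by ring
              _ ≤ (‖x l‖ * ω j) * ω l := mul_le_mul_of_nonneg_right h1 hωl.le
              _ = ω j * (‖x l‖ * ω l) := by ring
            have h2 : ‖x j‖ * (s / 2) ≤ ω j * a := by
              refine le_trans ?_ hsum
              exact mul_le_mul_of_nonneg_left hhalf (norm_nonneg _)
            rw [ht']
            rw [div_mul_eq_mul_div, le_div_iff₀ hspos]
            nlinarith
        · simp only [hx', restr, hjS, if_neg, not_false_iff]
          simp only [norm_zero]
          positivity
      have hihx' := key_induction A ω hω s hs hspos δ hδ hRIP (spt x').card x'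
        le_rfl t' ht'0 hx'b
      have hwsum : wl1 ω x = a + wl1 ω x' := by rw [ha, hx', hy]; exact wl1_split ω S x
      have hterm : Real.sqrt s * t' / 2 = a / Real.sqrt s := by
        rw [ht']
        calc Real.sqrt s * (2 * a / s) / 2 = (Real.sqrt s / s) * a := by ring
        _ = (Real.sqrt s / (Real.sqrt s * Real.sqrt s)) * a := by
            rw [Real.mul_self_sqrt hspos.le]
        _ = (1 / Real.sqrt s) * a := by
            rw [div_mul_eq_div_div, div_self hσ.ne']
        _ = a / Real.sqrt s := one_div_mul_eq_div _ _
      have htri : l2 (A.mulVec x) ≤ l2 (A.mulVec y) + l2 (A.mulVec x') := by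
        rw [hsplit, Matrix.mulVec_add]; exact l2_add_le' _ _
      have hstep : a / Real.sqrt s + (2 / Real.sqrt s) * wl1 ω x'
          ≤ (2 / Real.sqrt s) * (a + wl1 ω x') := by
        have hinv : (0:ℝ) ≤ a / Real.sqrt s := by positivity
        have : (2 / Real.sqrt s) * (a + wl1 ω x')
            = (2 / Real.sqrt s) * a + (2 / Real.sqrt s) * wl1 ω x' := by ring
        rw [this]
        have h4 : a / Real.sqrt s ≤ (2 / Real.sqrt s) * a := by
          rw [div_eq_mul_inv, div_eq_mul_inv]
          have h5 : (0:ℝ) ≤ a * (Real.sqrt s)⁻¹ := by positivity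
          nlinarith
        linarith
      calc l2 (A.mulVec x) ≤ l2 (A.mulVec y) + l2 (A.mulVec x') := htri
      _ ≤ Real.sqrt (1 + δ) * l2 y +
          Real.sqrt (1 + δ) * (Real.sqrt s * t' / 2 + (2 / Real.sqrt s) * wl1 ω x') :=
          add_le_add hyb hihx'
      _ ≤ Real.sqrt (1 + δ) * l2 x +
          Real.sqrt (1 + δ) * (a / Real.sqrt s + (2 / Real.sqrt s) * wl1 ω x') := by
          refine add_le_add (mul_le_mul_of_nonneg_left hyle hδ1) ?_
          rw [hterm]
      _ ≤ Real.sqrt (1 + δ) * l2 x +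
          Real.sqrt (1 + δ) * ((2 / Real.sqrt s) * (a + wl1 ω x')) := by
          refine add_le_add le_rfl (mul_le_mul_of_nonneg_left hstep hδ1)
      _ = Real.sqrt (1 + δ) * (l2 x + (2 / Real.sqrt s) * wl1 ω x) := by
          rw [hwsum]; ring
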